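/- Let (H, ·, ∘) be a Hopf brace and define g⇀h := S(g₍₁₎)·(g₍₂₎∘h). Then ⇀ makes H into a left module algebra over the Hopf algebra (H, ∘): namely 1⇀h = h, g⇀(h⇀ℓ) = (g∘h)⇀ℓ, g⇀1 = ε(g)1, and g⇀(h·k) = (g₍₁₎⇀h)·(g₍₂₎⇀k) for all g,h,k,ℓ ∈ H. -/

import Mathlib

open scoped TensorProduct
open Coalgebra

variable (R H : Type*) [CommRing R] [AddCommGroup H] [Module R H] [Coalgebra R H]


/-- A Hopf algebra structure (multiplication, unit, antipode) on the coalgebra `H`: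
the multiplication is associative with unit, comultiplication and counit are algebra
maps, and `S` is an antipode (expressed via arbitrary Sweedler representations). -/
structure HopfMul where
  mul : H →ₗ[R] H →ₗ[R] H
  one : H
  S : H →ₗ[R] H
  mul_assoc : ∀ a b c : H, mul (mul a b) c = mul a (mul b c)
  one_mul : ∀ a : H, mul one a = a
  mul_one : ∀ a : H, mul a one = a
  comul_mul : ∀ (a b : H) {ι κ : Type*} (ra : Coalgebra.Repr R a ι) (rb : Coalgebra.Repr R b κ),
    comul (R := R) (mul a b) = ∑ i ∈ ra.index, ∑ j ∈ rb.index,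
      mul (ra.left i) (rb.left j) ⊗ₜ[R] mul (ra.right i) (rb.right j)
  comul_one : comul (R := R) one = one ⊗ₜ[R] one
  counit_mul : ∀ a b : H, counit (R := R) (mul a b) = counit (R := R) a * counit (R := R) b
  counit_one : counit (R := R) one = 1
  S_mul_left : ∀ (a : H) {ι : Type*} (r : Coalgebra.Repr R a ι),
    ∑ i ∈ r.index, mul (S (r.left i)) (r.right i) = counit (R := R) a • one
  S_mul_right : ∀ (a : H) {ι : Type*} (r : Coalgebra.Repr R a ι),
    ∑ i ∈ r.index, mul (r.left i) (S (r.right i)) = counit (R := R) a • one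

universe d₁ d₂ d₃ d₄ c₁ c₂ c₃ c₄

/-- A Hopf brace: two Hopf algebra structures `dot` (written `·`) and `circ` (written `∘`)
on the same coalgebra `H`, satisfying `g∘(h·ℓ) = (g₍₁₎∘h)·S(g₍₂₎)·(g₍₃₎∘ℓ)`. -/
structure HopfBrace where
  dot : HopfMul.{_, _, d₁, d₂, d₃, d₄} R H
  circ : HopfMul.{_, _, c₁, c₂, c₃, c₄} R H
  compat : ∀ (g h ℓ : H) {ι : Type*} (r : Coalgebra.Repr R g ι) {κ : ι → Type*}
      (r2 : ∀ i : ι, Coalgebra.Repr R (r.right i) (κ i)),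
    circ.mul g (dot.mul h ℓ) = ∑ i ∈ r.index, ∑ j ∈ (r2 i).index,
      dot.mul (dot.mul (circ.mul (r.left i) h) (dot.S ((r2 i).left j)))
        (circ.mul ((r2 i).right j) ℓ)

section AuxGeneral
variable {R H}

/-- Apply a trilinear map to an element of `H ⊗ (H ⊗ H)`. -/
noncomputable def ap3 (T : H →ₗ[R] H →ₗ[R] H →ₗ[R] H) : H ⊗[R] (H ⊗[R] H) →ₗ[R] H :=
  TensorProduct.lift ((TensorProduct.uncurry (RingHom.id R) H H H) ∘ₗ T)

@[simp] lemma ap3_tmul (T : H →ₗ[R] H →ₗ[R] H →ₗ[R] H) (x y z : H) :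
    ap3 T (x ⊗ₜ[R] (y ⊗ₜ[R] z)) = T x y z := by
  simp [ap3]

lemma repr_sum_eq (B : H →ₗ[R] H →ₗ[R] H) {a : H} {ι : Type*} (r : Coalgebra.Repr R a ι) :
    ∑ i ∈ r.index, B (r.left i) (r.right i)
      = TensorProduct.uncurry (RingHom.id R) H H H B (comul (R := R) a) := by
  rw [← r.eq, map_sum]
  simp

lemma coassoc_sum (T : H →ₗ[R] H →ₗ[R] H →ₗ[R] H) {a : H} {ι : Type*} {κ Λ : ι → Type*} (r : Coalgebra.Repr R a ι)
    (rL : ∀ i : ι, Coalgebra.Repr R (r.left i) (κ i))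
    (rR : ∀ i : ι, Coalgebra.Repr R (r.right i) (Λ i)) :
    ∑ i ∈ r.index, ∑ j ∈ (rL i).index,
        T ((rL i).left j) ((rL i).right j) (r.right i)
      = ∑ i ∈ r.index, ∑ j ∈ (rR i).index,
        T (r.left i) ((rR i).left j) ((rR i).right j) := by
  have h := Coalgebra.sum_tmul_tmul_eq r rL rR
  have h2 := congrArg (ap3 T) h
  simpa [map_sum] using h2

lemma counit_sum {a : H} {ι : Type*} (r : Coalgebra.Repr R a ι) :
    ∑ i ∈ r.index, counit (R := R) (r.left i) • r.right i = a := by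
  have h := congrArg (TensorProduct.lid R H) (Coalgebra.sum_counit_tmul_eq r)
  rw [map_sum] at h
  simp only [TensorProduct.lid_tmul] at h
  simpa using h

/-- Reordering of interleaved double-double sums. -/
lemma comm4 {A B M : Type*} [AddCommMonoid M] {κ : A → Type*} {μ : B → Type*}
    (s : Finset A) (t : Finset B) (u : ∀ a, Finset (κ a)) (v : ∀ b, Finset (μ b))
    (f : (a : A) → (b : B) → κ a → μ b → M) :
    ∑ a ∈ s, ∑ b ∈ t, ∑ j ∈ u a, ∑ q ∈ v b, f a b j q
      = ∑ b ∈ t, ∑ q ∈ v b, ∑ a ∈ s, ∑ j ∈ u a, f a b j q := by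
  rw [Finset.sum_comm]
  refine Finset.sum_congr rfl fun b _ => ?_
  rw [Finset.sum_comm]
  refine Finset.sum_congr rfl fun a _ => ?_
  rw [Finset.sum_comm]

/-- Reordering: two independent double sums commute as blocks. -/
lemma comm4' {A B M : Type*} [AddCommMonoid M] {κ : A → Type*} {μ : B → Type*}
    (s : Finset A) (t : Finset B) (u : ∀ a, Finset (κ a)) (v : ∀ b, Finset (μ b))
    (f : (a : A) → (b : B) → κ a → μ b → M) :
    ∑ b ∈ t, ∑ q ∈ v b, ∑ a ∈ s, ∑ j ∈ u a, f a b j q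
      = ∑ a ∈ s, ∑ j ∈ u a, ∑ b ∈ t, ∑ q ∈ v b, f a b j q := by
  have step1 : ∀ b ∈ t, ∑ q ∈ v b, ∑ a ∈ s, ∑ j ∈ u a, f a b j q
      = ∑ a ∈ s, ∑ q ∈ v b, ∑ j ∈ u a, f a b j q := fun b _ => Finset.sum_comm
  rw [Finset.sum_congr rfl step1, Finset.sum_comm]
  refine Finset.sum_congr rfl fun a _ => ?_
  have step2 : ∀ b ∈ t, ∑ q ∈ v b, ∑ j ∈ u a, f a b j q
      = ∑ j ∈ u a, ∑ q ∈ v b, f a b j q := fun b _ => Finset.sum_comm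
  rw [Finset.sum_congr rfl step2, Finset.sum_comm]

/-- trilinear map `(a,b,c) ↦ A a (B b c)` -/
noncomputable def cmp3 (A B : H →ₗ[R] H →ₗ[R] H) : H →ₗ[R] H →ₗ[R] H →ₗ[R] H :=
  LinearMap.mk₂ R (fun a b => (A a).comp (B b))
    (fun a a' b => by ext c; simp)
    (fun c a b => by ext x; simp)
    (fun a b b' => by ext c; simp)
    (fun c a b => by ext x; simp)

@[simp] lemma cmp3_apply (A B : H →ₗ[R] H →ₗ[R] H) (a b c : H) :
    cmp3 A B a b c = A a (B b c) := rfl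

/-- trilinear map `(a,b,c) ↦ A (B a b) c` -/
noncomputable def cmp3' (A B : H →ₗ[R] H →ₗ[R] H) : H →ₗ[R] H →ₗ[R] H →ₗ[R] H :=
  LinearMap.mk₂ R (fun a b => A (B a b))
    (fun a a' b => by simp)
    (fun c a b => by simp)
    (fun a b b' => by simp)
    (fun c a b => by simp)

@[simp] lemma cmp3'_apply (A B : H →ₗ[R] H →ₗ[R] H) (a b c : H) :
    cmp3' A B a b c = A (B a b) c := rfl

end AuxGeneral

section AuxBrace
universe w
variable {R H}

/-- The trivial representation of `comul` of the `circ`-unit. -/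
noncomputable def oneRepr (Br : HopfBrace R H) : Coalgebra.Repr R Br.circ.one PUnit.{w + 1} where
  index := {PUnit.unit}
  left := fun _ => Br.circ.one
  right := fun _ => Br.circ.one
  eq := by rw [Finset.sum_singleton]; exact Br.circ.comul_one.symm

/-- Universe-adjusted copy of a representation. -/
noncomputable def reindex {a : H} {ι : Type*} (r : Coalgebra.Repr R a ι) :
    Coalgebra.Repr R a (ULift.{w} (Fin r.index.card)) where
  index := Finset.univ
  left := fun i => r.left ((r.index.equivFin.symm i.down) : {x // x ∈ r.index})
  right := fun i => r.right ((r.index.equivFin.symm i.down) : {x // x ∈ r.index})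
  eq := by
    rw [← r.eq]
    rw [← Finset.sum_coe_sort r.index (fun x => r.left x ⊗ₜ[R] r.right x)]
    exact Fintype.sum_equiv (Equiv.ulift.trans r.index.equivFin.symm)
      _ _ (fun i => rfl)

lemma reindex_sum {M : Type*} [AddCommMonoid M] {a : H} {ι : Type*} (r : Coalgebra.Repr R a ι)
    (F : H → H → M) :
    ∑ i ∈ (reindex.{w} r).index,
        F ((reindex r).left i) ((reindex r).right i)
      = ∑ i ∈ r.index, F (r.left i) (r.right i) := by
  rw [← Finset.sum_coe_sort r.index (fun x => F (r.left x) (r.right x))]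
  exact Fintype.sum_equiv (Equiv.ulift.trans r.index.equivFin.symm)
    _ _ (fun i => rfl)

/-- Product representation for `comul (m.mul a b)`. -/
noncomputable def mulRepr (m : HopfMul R H) {a b : H} {ι κ : Type*}
    (ra : Coalgebra.Repr R a ι) (rb : Coalgebra.Repr R b κ) :
    Coalgebra.Repr R (m.mul a b) (ι × κ) where
  index := ra.index ×ˢ rb.index
  left := fun p => m.mul (ra.left p.1) (rb.left p.2)
  right := fun p => m.mul (ra.right p.1) (rb.right p.2)
  eq := by
    rw [Finset.sum_product, m.comul_mul a b (reindex ra) (reindex rb)]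
    calc
      ∑ i ∈ ra.index, ∑ j ∈ rb.index,
          m.mul (ra.left i) (rb.left j) ⊗ₜ[R] m.mul (ra.right i) (rb.right j)
        = ∑ z ∈ (reindex ra).index, ∑ j ∈ rb.index,
            m.mul ((reindex ra).left z) (rb.left j) ⊗ₜ[R]
              m.mul ((reindex ra).right z) (rb.right j) :=
          (reindex_sum ra (fun c d => ∑ j ∈ rb.index,
            m.mul c (rb.left j) ⊗ₜ[R] m.mul d (rb.right j))).symm
      _ = ∑ z ∈ (reindex ra).index, ∑ w ∈ (reindex rb).index,
            m.mul ((reindex ra).left z) ((reindex rb).left w) ⊗ₜ[R]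
              m.mul ((reindex ra).right z) ((reindex rb).right w) :=
          Finset.sum_congr rfl fun z _ => (reindex_sum rb (fun c d =>
            m.mul ((reindex ra).left z) c ⊗ₜ[R]
              m.mul ((reindex ra).right z) d)).symm

lemma mulRepr_sum {M' : Type*} [AddCommMonoid M'] (m : HopfMul R H) {a b : H} {ι κ : Type*}
    (ra : Coalgebra.Repr R a ι) (rb : Coalgebra.Repr R b κ) (F : H → H → M') :
    ∑ z ∈ (mulRepr m ra rb).index,
        F ((mulRepr m ra rb).left z) ((mulRepr m ra rb).right z)
      = ∑ i ∈ ra.index, ∑ j ∈ rb.index,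
          F (m.mul (ra.left i) (rb.left j)) (m.mul (ra.right i) (rb.right j)) :=
  Finset.sum_product _ _ _

lemma S_circ_one (Br : HopfBrace R H) : Br.dot.S Br.circ.one = Br.dot.one := by
  have h := Br.compat Br.circ.one Br.dot.one Br.dot.one (oneRepr Br) (fun _ => oneRepr Br)
  simp only [oneRepr, Finset.sum_singleton, Br.dot.mul_one, Br.circ.one_mul,
    Br.dot.one_mul] at h
  exact h.symm

lemma one_eq (Br : HopfBrace R H) : Br.circ.one = Br.dot.one := by
  have h := Br.dot.S_mul_left Br.circ.one (oneRepr Br)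
  simp only [oneRepr, Finset.sum_singleton, S_circ_one, Br.dot.one_mul,
    Br.circ.counit_one, one_smul] at h
  exact h

/-- The bilinear map `(u, v) ↦ S(u)·(v∘m)`. -/
noncomputable def bilm (Br : HopfBrace R H) (m : H) : H →ₗ[R] H →ₗ[R] H :=
  Br.dot.mul.compl₁₂ Br.dot.S (Br.circ.mul.flip m)

@[simp] lemma bilm_apply (Br : HopfBrace R H) (m u v : H) :
    bilm Br m u v = Br.dot.mul (Br.dot.S u) (Br.circ.mul v m) := rfl

/-- The canonical linear form of the action: `A2 Br m x = x ⇀ m`. -/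
noncomputable def A2 (Br : HopfBrace R H) (m : H) : H →ₗ[R] H :=
  (TensorProduct.uncurry (RingHom.id R) H H H (bilm Br m)) ∘ₗ
    (CoalgebraStruct.comul (R := R) (A := H))

lemma A2_eq_sum (Br : HopfBrace R H) (m : H) {x : H} {ι : Type*} (r : Coalgebra.Repr R x ι) :
    A2 Br m x = ∑ i ∈ r.index,
      Br.dot.mul (Br.dot.S (r.left i)) (Br.circ.mul (r.right i) m) := by
  have h := repr_sum_eq (bilm Br m) r
  simp only [bilm_apply] at h
  rw [A2, LinearMap.comp_apply, ← h]

lemma A2_add (Br : HopfBrace R H) (m m' : H) :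
    A2 Br (m + m') = A2 Br m + A2 Br m' := by
  have hb : bilm Br (m + m') = bilm Br m + bilm Br m' := by
    ext u v; simp
  rw [A2, A2, A2, hb, map_add, LinearMap.add_comp]

lemma A2_smul (Br : HopfBrace R H) (c : R) (m : H) :
    A2 Br (c • m) = c • A2 Br m := by
  have hb : bilm Br (c • m) = c • bilm Br m := by
    ext u v; simp
  rw [A2, A2, hb, map_smul, LinearMap.smul_comp]

/-- The bilinear map `(g,h) ↦ g ⇀ (h ⇀ ℓ)`. -/
noncomputable def psim (Br : HopfBrace R H) (ℓ : H) : H →ₗ[R] H →ₗ[R] H :=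
  LinearMap.mk₂ R (fun g h => A2 Br (A2 Br ℓ h) g)
    (fun g g' h => by simp)
    (fun c g h => by simp)
    (fun g h h' => by simp [map_add, A2_add])
    (fun c g h => by simp [map_smul, A2_smul])

@[simp] lemma psim_apply (Br : HopfBrace R H) (ℓ g h : H) :
    psim Br ℓ g h = A2 Br (A2 Br ℓ h) g := rfl

end AuxBrace
section AuxBrace2
variable {R H}

lemma circ_eq (Br : HopfBrace R H) (x y : H) {ι : Type*} (r : Coalgebra.Repr R x ι) :
    ∑ i ∈ r.index, Br.dot.mul (r.left i) (A2 Br y (r.right i))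
      = Br.circ.mul x y := by
  calc
    ∑ i ∈ r.index, Br.dot.mul (r.left i) (A2 Br y (r.right i))
      = ∑ i ∈ r.index, ∑ j ∈ (ℛ R (r.right i)).index,
          cmp3 Br.dot.mul (bilm Br y) (r.left i)
            ((ℛ R (r.right i)).left j) ((ℛ R (r.right i)).right j) := by
        refine Finset.sum_congr rfl fun i _ => ?_
        rw [A2_eq_sum Br y (ℛ R (r.right i)), map_sum]
        simp
    _ = ∑ i ∈ r.index, ∑ j ∈ (reindex (ℛ R (r.left i))).index,
          cmp3 Br.dot.mul (bilm Br y) ((reindex (ℛ R (r.left i))).left j)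
            ((reindex (ℛ R (r.left i))).right j) (r.right i) :=
        (coassoc_sum (cmp3 Br.dot.mul (bilm Br y)) r
          (fun i => reindex (ℛ R (r.left i))) (fun i => ℛ R (r.right i))).symm
    _ = ∑ i ∈ r.index, counit (R := R) (r.left i) • Br.circ.mul (r.right i) y := by
        refine Finset.sum_congr rfl fun i _ => ?_
        calc
          ∑ j ∈ (reindex (ℛ R (r.left i))).index,
              cmp3 Br.dot.mul (bilm Br y) ((reindex (ℛ R (r.left i))).left j)
                ((reindex (ℛ R (r.left i))).right j) (r.right i)
            = ∑ j ∈ (reindex (ℛ R (r.left i))).index,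
                (Br.dot.mul.flip (Br.circ.mul (r.right i) y))
                  (Br.dot.mul ((reindex (ℛ R (r.left i))).left j)
                    (Br.dot.S ((reindex (ℛ R (r.left i))).right j))) := by
              refine Finset.sum_congr rfl fun j _ => ?_
              simp only [cmp3_apply, bilm_apply, LinearMap.flip_apply]
              rw [Br.dot.mul_assoc]
          _ = (Br.dot.mul.flip (Br.circ.mul (r.right i) y))
                (∑ j ∈ (reindex (ℛ R (r.left i))).index,
                  Br.dot.mul ((reindex (ℛ R (r.left i))).left j)
                    (Br.dot.S ((reindex (ℛ R (r.left i))).right j))) := by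
              rw [map_sum]
          _ = (Br.dot.mul.flip (Br.circ.mul (r.right i) y))
                (counit (R := R) (r.left i) • Br.dot.one) := by
              rw [Br.dot.S_mul_right (r.left i) (reindex (ℛ R (r.left i)))]
          _ = counit (R := R) (r.left i) • Br.circ.mul (r.right i) y := by
              rw [map_smul]
              simp only [LinearMap.flip_apply]
              rw [Br.dot.one_mul]
    _ = Br.circ.mul x y := by
        have h2 := congrArg (Br.circ.mul.flip y) (counit_sum r)
        rw [map_sum] at h2
        simp only [map_smul, LinearMap.flip_apply] at h2
        exact h2

lemma compat_act (Br : HopfBrace R H) (x u v : H) {ι : Type*} (r : Coalgebra.Repr R x ι) :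
    Br.circ.mul x (Br.dot.mul u v)
      = ∑ i ∈ r.index,
          Br.dot.mul (Br.circ.mul (r.left i) u) (A2 Br v (r.right i)) := by
  set E : H →ₗ[R] H →ₗ[R] H :=
    Br.dot.mul.compl₁₂ (Br.circ.mul.flip u) (A2 Br v) with hE
  have h1 : Br.circ.mul x (Br.dot.mul u v)
      = ∑ i ∈ (reindex (ℛ R x)).index,
          E ((reindex (ℛ R x)).left i) ((reindex (ℛ R x)).right i) := by
    rw [Br.compat x u v (reindex (ℛ R x))
      (fun i => reindex (ℛ R ((reindex (ℛ R x)).right i)))]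
    refine Finset.sum_congr rfl fun i _ => ?_
    simp only [hE, LinearMap.compl₁₂_apply, LinearMap.flip_apply]
    rw [A2_eq_sum Br v (reindex (ℛ R ((reindex (ℛ R x)).right i))), map_sum]
    refine Finset.sum_congr rfl fun j _ => ?_
    rw [Br.dot.mul_assoc]
  calc Br.circ.mul x (Br.dot.mul u v)
      = ∑ i ∈ (reindex (ℛ R x)).index,
          E ((reindex (ℛ R x)).left i) ((reindex (ℛ R x)).right i) := h1
    _ = TensorProduct.uncurry (RingHom.id R) H H H E (comul (R := R) x) :=
        repr_sum_eq E (reindex (ℛ R x))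
    _ = ∑ i ∈ r.index, E (r.left i) (r.right i) := (repr_sum_eq E r).symm
    _ = ∑ i ∈ r.index,
          Br.dot.mul (Br.circ.mul (r.left i) u) (A2 Br v (r.right i)) := rfl

lemma Mstar (Br : HopfBrace R H) (x y ℓ : H)
    {ι κ : Type*} (rx : Coalgebra.Repr R x ι) (ry : Coalgebra.Repr R y κ) :
    Br.circ.mul x (Br.circ.mul y ℓ)
      = ∑ i ∈ rx.index, ∑ p ∈ ry.index,
          Br.dot.mul (Br.circ.mul (rx.left i) (ry.left p))
            (psim Br ℓ (rx.right i) (ry.right p)) := by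
  calc
    Br.circ.mul x (Br.circ.mul y ℓ)
      = Br.circ.mul x (∑ p ∈ ry.index,
          Br.dot.mul (ry.left p) (A2 Br ℓ (ry.right p))) := by
        rw [circ_eq Br y ℓ ry]
    _ = ∑ p ∈ ry.index, Br.circ.mul x
          (Br.dot.mul (ry.left p) (A2 Br ℓ (ry.right p))) := by
        rw [map_sum]
    _ = ∑ p ∈ ry.index, ∑ i ∈ rx.index,
          Br.dot.mul (Br.circ.mul (rx.left i) (ry.left p))
            (A2 Br (A2 Br ℓ (ry.right p)) (rx.right i)) :=
        Finset.sum_congr rfl fun p _ =>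
          compat_act Br x (ry.left p) (A2 Br ℓ (ry.right p)) rx
    _ = ∑ i ∈ rx.index, ∑ p ∈ ry.index,
          Br.dot.mul (Br.circ.mul (rx.left i) (ry.left p))
            (psim Br ℓ (rx.right i) (ry.right p)) := by
        rw [Finset.sum_comm]
        rfl

end AuxBrace2
section AuxBrace3
variable {R H}

lemma L1 (Br : HopfBrace R H) (X : H →ₗ[R] H →ₗ[R] H) (g h : H)
    {ι κ : Type*} {ι₂ : ι → Type*} {κ₂ : κ → Type*}
    (rg : Coalgebra.Repr R g ι) (rh : Coalgebra.Repr R h κ)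
    (rg2 : ∀ i : ι, Coalgebra.Repr R (rg.left i) (ι₂ i))
    (rh2 : ∀ p : κ, Coalgebra.Repr R (rh.left p) (κ₂ p)) :
    ∑ i ∈ rg.index, ∑ j ∈ (rg2 i).index, ∑ p ∈ rh.index, ∑ q ∈ (rh2 p).index,
      Br.dot.mul
        (Br.dot.mul (Br.dot.S (Br.circ.mul ((rg2 i).left j) ((rh2 p).left q)))
          (Br.circ.mul ((rg2 i).right j) ((rh2 p).right q)))
        (X (rg.right i) (rh.right p))
    = X g h := by
  have inner : ∀ i ∈ rg.index, ∀ p ∈ rh.index,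
      ∑ j ∈ (rg2 i).index, ∑ q ∈ (rh2 p).index,
        Br.dot.mul
          (Br.dot.mul (Br.dot.S (Br.circ.mul ((rg2 i).left j) ((rh2 p).left q)))
            (Br.circ.mul ((rg2 i).right j) ((rh2 p).right q)))
          (X (rg.right i) (rh.right p))
      = (counit (R := R) (rg.left i) * counit (R := R) (rh.left p)) •
          X (rg.right i) (rh.right p) := by
    intro i _ p _
    have hS : ∑ j ∈ (rg2 i).index, ∑ q ∈ (rh2 p).index,
        Br.dot.mul
          (Br.dot.S (Br.circ.mul ((rg2 i).left j) ((rh2 p).left q)))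
          (Br.circ.mul ((rg2 i).right j) ((rh2 p).right q))
        = counit (R := R) (Br.circ.mul (rg.left i) (rh.left p)) • Br.dot.one := by
      calc
        ∑ j ∈ (rg2 i).index, ∑ q ∈ (rh2 p).index,
            Br.dot.mul
              (Br.dot.S (Br.circ.mul ((rg2 i).left j) ((rh2 p).left q)))
              (Br.circ.mul ((rg2 i).right j) ((rh2 p).right q))
          = ∑ z ∈ (mulRepr Br.circ (rg2 i) (rh2 p)).index,
              Br.dot.mul
                (Br.dot.S ((mulRepr Br.circ (rg2 i) (rh2 p)).left z))
                ((mulRepr Br.circ (rg2 i) (rh2 p)).right z) :=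
            (mulRepr_sum Br.circ (rg2 i) (rh2 p)
              (fun c d => Br.dot.mul (Br.dot.S c) d)).symm
        _ = ∑ z ∈ (reindex (mulRepr Br.circ (rg2 i) (rh2 p))).index,
              Br.dot.mul
                (Br.dot.S ((reindex (mulRepr Br.circ (rg2 i) (rh2 p))).left z))
                ((reindex (mulRepr Br.circ (rg2 i) (rh2 p))).right z) :=
            (reindex_sum (mulRepr Br.circ (rg2 i) (rh2 p))
              (fun c d => Br.dot.mul (Br.dot.S c) d)).symm
        _ = counit (R := R) (Br.circ.mul (rg.left i) (rh.left p)) • Br.dot.one :=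
            Br.dot.S_mul_left (Br.circ.mul (rg.left i) (rh.left p))
              (reindex (mulRepr Br.circ (rg2 i) (rh2 p)))
    calc
      ∑ j ∈ (rg2 i).index, ∑ q ∈ (rh2 p).index,
          Br.dot.mul
            (Br.dot.mul (Br.dot.S (Br.circ.mul ((rg2 i).left j) ((rh2 p).left q)))
              (Br.circ.mul ((rg2 i).right j) ((rh2 p).right q)))
            (X (rg.right i) (rh.right p))
        = (Br.dot.mul.flip (X (rg.right i) (rh.right p)))
            (∑ j ∈ (rg2 i).index, ∑ q ∈ (rh2 p).index,
              Br.dot.mul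
                (Br.dot.S (Br.circ.mul ((rg2 i).left j) ((rh2 p).left q)))
                (Br.circ.mul ((rg2 i).right j) ((rh2 p).right q))) := by
          rw [map_sum]
          refine Finset.sum_congr rfl fun j _ => ?_
          rw [map_sum]
          simp [LinearMap.flip_apply]
      _ = (Br.dot.mul.flip (X (rg.right i) (rh.right p)))
            (counit (R := R) (Br.circ.mul (rg.left i) (rh.left p)) • Br.dot.one) := by
          rw [hS]
      _ = (counit (R := R) (rg.left i) * counit (R := R) (rh.left p)) •
            X (rg.right i) (rh.right p) := by
          rw [map_smul, Br.circ.counit_mul]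
          simp only [LinearMap.flip_apply]
          rw [Br.dot.one_mul]
  calc
    ∑ i ∈ rg.index, ∑ j ∈ (rg2 i).index, ∑ p ∈ rh.index, ∑ q ∈ (rh2 p).index,
        Br.dot.mul
          (Br.dot.mul (Br.dot.S (Br.circ.mul ((rg2 i).left j) ((rh2 p).left q)))
            (Br.circ.mul ((rg2 i).right j) ((rh2 p).right q)))
          (X (rg.right i) (rh.right p))
      = ∑ i ∈ rg.index, ∑ p ∈ rh.index, ∑ j ∈ (rg2 i).index, ∑ q ∈ (rh2 p).index,
          Br.dot.mul
            (Br.dot.mul (Br.dot.S (Br.circ.mul ((rg2 i).left j) ((rh2 p).left q)))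
              (Br.circ.mul ((rg2 i).right j) ((rh2 p).right q)))
            (X (rg.right i) (rh.right p)) :=
        Finset.sum_congr rfl fun i _ => Finset.sum_comm
    _ = ∑ i ∈ rg.index, ∑ p ∈ rh.index,
          (counit (R := R) (rg.left i) * counit (R := R) (rh.left p)) •
            X (rg.right i) (rh.right p) :=
        Finset.sum_congr rfl fun i hi => Finset.sum_congr rfl fun p hp =>
          inner i hi p hp
    _ = ∑ i ∈ rg.index, counit (R := R) (rg.left i) •
          X (rg.right i) h := by
        refine Finset.sum_congr rfl fun i _ => ?_
        calc
          ∑ p ∈ rh.index,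
              (counit (R := R) (rg.left i) * counit (R := R) (rh.left p)) •
                X (rg.right i) (rh.right p)
            = counit (R := R) (rg.left i) •
                ∑ p ∈ rh.index, counit (R := R) (rh.left p) •
                  X (rg.right i) (rh.right p) := by
              rw [Finset.smul_sum]
              refine Finset.sum_congr rfl fun p _ => ?_
              rw [mul_smul]
          _ = counit (R := R) (rg.left i) • X (rg.right i) h := by
              congr 1
              calc
                ∑ p ∈ rh.index, counit (R := R) (rh.left p) •
                    X (rg.right i) (rh.right p)
                  = X (rg.right i)
                      (∑ p ∈ rh.index, counit (R := R) (rh.left p) • rh.right p) := by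
                    rw [map_sum]
                    exact Finset.sum_congr rfl fun p _ => (map_smul _ _ _).symm
                _ = X (rg.right i) h := by rw [counit_sum rh]
    _ = X g h := by
        calc
          ∑ i ∈ rg.index, counit (R := R) (rg.left i) • X (rg.right i) h
            = (X.flip h) (∑ i ∈ rg.index, counit (R := R) (rg.left i) • rg.right i) := by
              rw [map_sum]
              exact Finset.sum_congr rfl fun i _ =>
                (map_smul (X.flip h) (counit (R := R) (rg.left i)) (rg.right i)).symm
          _ = X g h := by rw [counit_sum rg]; rfl

end AuxBrace3
/-- In a Hopf brace, `g⇀h := S(g₍₁₎)·(g₍₂₎∘h)` makes `H` a left module algebra over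
`(H,∘)`: `1⇀h = h`, `g⇀(h⇀ℓ) = (g∘h)⇀ℓ`, `g⇀1 = ε(g)1` and
`g⇀(h·k) = (g₍₁₎⇀h)·(g₍₂₎⇀k)`. -/
theorem hopfBrace_module_algebra (Br : HopfBrace R H) (act : H → H → H)
    (hact : ∀ (g h : H) {ι : Type*} (r : Coalgebra.Repr R g ι),
      act g h = ∑ i ∈ r.index,
        Br.dot.mul (Br.dot.S (r.left i)) (Br.circ.mul (r.right i) h)) :
    (∀ h : H, act Br.circ.one h = h) ∧
    (∀ g h ℓ : H, act g (act h ℓ) = act (Br.circ.mul g h) ℓ) ∧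
    (∀ g : H, act g Br.dot.one = counit (R := R) g • Br.dot.one) ∧
    (∀ (g h k : H) {ι : Type*} (r : Coalgebra.Repr R g ι),
      act g (Br.dot.mul h k) =
        ∑ i ∈ r.index, Br.dot.mul (act (r.left i) h) (act (r.right i) k)) := by
  have hA : ∀ (x m : H), act x m = A2 Br m x := fun x m => by
    rw [hact x m (reindex (ℛ R x))]
    exact (A2_eq_sum Br m (reindex (ℛ R x))).symm
  refine ⟨?_, ?_, ?_, ?_⟩
  · -- unit acts trivially
    intro h
    rw [hact Br.circ.one h (oneRepr Br)]
    simp only [oneRepr]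
    rw [Finset.sum_singleton, S_circ_one, Br.dot.one_mul, Br.circ.one_mul]
  · -- action property
    intro g h ℓ
    symm
    calc
      act (Br.circ.mul g h) ℓ
        = ∑ z ∈ (reindex (mulRepr Br.circ (reindex.{0} (ℛ R g)) (reindex.{0} (ℛ R h)))).index,
            Br.dot.mul
              (Br.dot.S ((reindex (mulRepr Br.circ (reindex.{0} (ℛ R g)) (reindex.{0} (ℛ R h)))).left z))
              (Br.circ.mul
                ((reindex (mulRepr Br.circ (reindex.{0} (ℛ R g)) (reindex.{0} (ℛ R h)))).right z) ℓ) :=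
          hact _ _ (reindex (mulRepr Br.circ (reindex.{0} (ℛ R g)) (reindex.{0} (ℛ R h))))
      _ = ∑ z ∈ (mulRepr Br.circ (reindex.{0} (ℛ R g)) (reindex.{0} (ℛ R h))).index,
            Br.dot.mul
              (Br.dot.S ((mulRepr Br.circ (reindex.{0} (ℛ R g)) (reindex.{0} (ℛ R h))).left z))
              (Br.circ.mul
                ((mulRepr Br.circ (reindex.{0} (ℛ R g)) (reindex.{0} (ℛ R h))).right z) ℓ) :=
          reindex_sum (mulRepr Br.circ (reindex.{0} (ℛ R g)) (reindex.{0} (ℛ R h)))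
            (fun c d => Br.dot.mul (Br.dot.S c) (Br.circ.mul d ℓ))
      _ = ∑ i ∈ (reindex.{0} (ℛ R g)).index, ∑ p ∈ (reindex.{0} (ℛ R h)).index,
            Br.dot.mul
              (Br.dot.S (Br.circ.mul ((reindex.{0} (ℛ R g)).left i) ((reindex.{0} (ℛ R h)).left p)))
              (Br.circ.mul
                (Br.circ.mul ((reindex.{0} (ℛ R g)).right i) ((reindex.{0} (ℛ R h)).right p)) ℓ) :=
          mulRepr_sum Br.circ (reindex.{0} (ℛ R g)) (reindex.{0} (ℛ R h))
            (fun c d => Br.dot.mul (Br.dot.S c) (Br.circ.mul d ℓ))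
      _ = ∑ i ∈ (reindex.{0} (ℛ R g)).index, ∑ p ∈ (reindex.{0} (ℛ R h)).index,
            Br.dot.mul
              (Br.dot.S (Br.circ.mul ((reindex.{0} (ℛ R g)).left i) ((reindex.{0} (ℛ R h)).left p)))
              (Br.circ.mul ((reindex.{0} (ℛ R g)).right i)
                (Br.circ.mul ((reindex.{0} (ℛ R h)).right p) ℓ)) := by
          refine Finset.sum_congr rfl fun i _ => Finset.sum_congr rfl fun p _ => ?_
          rw [Br.circ.mul_assoc]
      _ = ∑ i ∈ (reindex.{0} (ℛ R g)).index, ∑ p ∈ (reindex.{0} (ℛ R h)).index,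
            ∑ j ∈ (reindex.{0} (ℛ R ((reindex.{0} (ℛ R g)).right i))).index,
            ∑ q ∈ (reindex.{0} (ℛ R ((reindex.{0} (ℛ R h)).right p))).index,
            Br.dot.mul
              (Br.dot.S (Br.circ.mul ((reindex.{0} (ℛ R g)).left i) ((reindex.{0} (ℛ R h)).left p)))
              (Br.dot.mul
                (Br.circ.mul ((reindex.{0} (ℛ R ((reindex.{0} (ℛ R g)).right i))).left j)
                  ((reindex.{0} (ℛ R ((reindex.{0} (ℛ R h)).right p))).left q))
                (psim Br ℓ ((reindex.{0} (ℛ R ((reindex.{0} (ℛ R g)).right i))).right j)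
                  ((reindex.{0} (ℛ R ((reindex.{0} (ℛ R h)).right p))).right q))) := by
          refine Finset.sum_congr rfl fun i _ => Finset.sum_congr rfl fun p _ => ?_
          rw [Mstar Br ((reindex.{0} (ℛ R g)).right i) ((reindex.{0} (ℛ R h)).right p) ℓ
            (reindex.{0} (ℛ R ((reindex.{0} (ℛ R g)).right i)))
            (reindex.{0} (ℛ R ((reindex.{0} (ℛ R h)).right p))), map_sum]
          refine Finset.sum_congr rfl fun j _ => ?_
          rw [map_sum]
      _ = ∑ p ∈ (reindex.{0} (ℛ R h)).index,
            ∑ q ∈ (reindex.{0} (ℛ R ((reindex.{0} (ℛ R h)).right p))).index,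
            ∑ i ∈ (reindex.{0} (ℛ R g)).index,
            ∑ j ∈ (reindex.{0} (ℛ R ((reindex.{0} (ℛ R g)).right i))).index,
            Br.dot.mul
              (Br.dot.S (Br.circ.mul ((reindex.{0} (ℛ R g)).left i) ((reindex.{0} (ℛ R h)).left p)))
              (Br.dot.mul
                (Br.circ.mul ((reindex.{0} (ℛ R ((reindex.{0} (ℛ R g)).right i))).left j)
                  ((reindex.{0} (ℛ R ((reindex.{0} (ℛ R h)).right p))).left q))
                (psim Br ℓ ((reindex.{0} (ℛ R ((reindex.{0} (ℛ R g)).right i))).right j)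
                  ((reindex.{0} (ℛ R ((reindex.{0} (ℛ R h)).right p))).right q))) := by
          rw [comm4]
      _ = ∑ p ∈ (reindex.{0} (ℛ R h)).index,
            ∑ q ∈ (reindex.{0} (ℛ R ((reindex.{0} (ℛ R h)).right p))).index,
            ∑ i ∈ (reindex.{0} (ℛ R g)).index,
            ∑ j ∈ (reindex.{0} (ℛ R ((reindex.{0} (ℛ R g)).left i))).index,
            Br.dot.mul
              (Br.dot.S (Br.circ.mul ((reindex.{0} (ℛ R ((reindex.{0} (ℛ R g)).left i))).left j)
                ((reindex.{0} (ℛ R h)).left p)))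
              (Br.dot.mul
                (Br.circ.mul ((reindex.{0} (ℛ R ((reindex.{0} (ℛ R g)).left i))).right j)
                  ((reindex.{0} (ℛ R ((reindex.{0} (ℛ R h)).right p))).left q))
                (psim Br ℓ ((reindex.{0} (ℛ R g)).right i)
                  ((reindex.{0} (ℛ R ((reindex.{0} (ℛ R h)).right p))).right q))) := by
          refine Finset.sum_congr rfl fun p _ => Finset.sum_congr rfl fun q _ => ?_
          exact (coassoc_sum
            (cmp3 (Br.dot.mul ∘ₗ (Br.dot.S ∘ₗ (Br.circ.mul.flip ((reindex.{0} (ℛ R h)).left p))))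
              (Br.dot.mul.compl₁₂
                (Br.circ.mul.flip ((reindex.{0} (ℛ R ((reindex.{0} (ℛ R h)).right p))).left q))
                ((psim Br ℓ).flip ((reindex.{0} (ℛ R ((reindex.{0} (ℛ R h)).right p))).right q))))
            (reindex.{0} (ℛ R g))
            (fun i => reindex.{0} (ℛ R ((reindex.{0} (ℛ R g)).left i)))
            (fun i => reindex.{0} (ℛ R ((reindex.{0} (ℛ R g)).right i)))).symm
      _ = ∑ i ∈ (reindex.{0} (ℛ R g)).index,
            ∑ j ∈ (reindex.{0} (ℛ R ((reindex.{0} (ℛ R g)).left i))).index,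
            ∑ p ∈ (reindex.{0} (ℛ R h)).index,
            ∑ q ∈ (reindex.{0} (ℛ R ((reindex.{0} (ℛ R h)).right p))).index,
            Br.dot.mul
              (Br.dot.S (Br.circ.mul ((reindex.{0} (ℛ R ((reindex.{0} (ℛ R g)).left i))).left j)
                ((reindex.{0} (ℛ R h)).left p)))
              (Br.dot.mul
                (Br.circ.mul ((reindex.{0} (ℛ R ((reindex.{0} (ℛ R g)).left i))).right j)
                  ((reindex.{0} (ℛ R ((reindex.{0} (ℛ R h)).right p))).left q))
                (psim Br ℓ ((reindex.{0} (ℛ R g)).right i)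
                  ((reindex.{0} (ℛ R ((reindex.{0} (ℛ R h)).right p))).right q))) := by
          rw [comm4']
      _ = ∑ i ∈ (reindex.{0} (ℛ R g)).index,
            ∑ j ∈ (reindex.{0} (ℛ R ((reindex.{0} (ℛ R g)).left i))).index,
            ∑ p ∈ (reindex.{0} (ℛ R h)).index,
            ∑ q ∈ (reindex.{0} (ℛ R ((reindex.{0} (ℛ R h)).left p))).index,
            Br.dot.mul
              (Br.dot.S (Br.circ.mul ((reindex.{0} (ℛ R ((reindex.{0} (ℛ R g)).left i))).left j)
                ((reindex.{0} (ℛ R ((reindex.{0} (ℛ R h)).left p))).left q)))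
              (Br.dot.mul
                (Br.circ.mul ((reindex.{0} (ℛ R ((reindex.{0} (ℛ R g)).left i))).right j)
                  ((reindex.{0} (ℛ R ((reindex.{0} (ℛ R h)).left p))).right q))
                (psim Br ℓ ((reindex.{0} (ℛ R g)).right i)
                  ((reindex.{0} (ℛ R h)).right p))) := by
          refine Finset.sum_congr rfl fun i _ => Finset.sum_congr rfl fun j _ => ?_
          exact (coassoc_sum
            (cmp3 (Br.dot.mul ∘ₗ (Br.dot.S ∘ₗ
                (Br.circ.mul ((reindex.{0} (ℛ R ((reindex.{0} (ℛ R g)).left i))).left j))))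
              (Br.dot.mul.compl₁₂
                (Br.circ.mul ((reindex.{0} (ℛ R ((reindex.{0} (ℛ R g)).left i))).right j))
                (psim Br ℓ ((reindex.{0} (ℛ R g)).right i))))
            (reindex.{0} (ℛ R h))
            (fun p => reindex.{0} (ℛ R ((reindex.{0} (ℛ R h)).left p)))
            (fun p => reindex.{0} (ℛ R ((reindex.{0} (ℛ R h)).right p)))).symm
      _ = ∑ i ∈ (reindex.{0} (ℛ R g)).index,
            ∑ j ∈ (reindex.{0} (ℛ R ((reindex.{0} (ℛ R g)).left i))).index,
            ∑ p ∈ (reindex.{0} (ℛ R h)).index,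
            ∑ q ∈ (reindex.{0} (ℛ R ((reindex.{0} (ℛ R h)).left p))).index,
            Br.dot.mul
              (Br.dot.mul
                (Br.dot.S (Br.circ.mul ((reindex.{0} (ℛ R ((reindex.{0} (ℛ R g)).left i))).left j)
                  ((reindex.{0} (ℛ R ((reindex.{0} (ℛ R h)).left p))).left q)))
                (Br.circ.mul ((reindex.{0} (ℛ R ((reindex.{0} (ℛ R g)).left i))).right j)
                  ((reindex.{0} (ℛ R ((reindex.{0} (ℛ R h)).left p))).right q)))
              (psim Br ℓ ((reindex.{0} (ℛ R g)).right i)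
                ((reindex.{0} (ℛ R h)).right p)) := by
          refine Finset.sum_congr rfl fun i _ => Finset.sum_congr rfl fun j _ =>
            Finset.sum_congr rfl fun p _ => Finset.sum_congr rfl fun q _ => ?_
          rw [Br.dot.mul_assoc]
      _ = psim Br ℓ g h :=
          L1 Br (psim Br ℓ) g h (reindex.{0} (ℛ R g)) (reindex.{0} (ℛ R h))
            (fun i => reindex.{0} (ℛ R ((reindex.{0} (ℛ R g)).left i)))
            (fun p => reindex.{0} (ℛ R ((reindex.{0} (ℛ R h)).left p)))
      _ = act g (act h ℓ) := by
          rw [hA g (act h ℓ), hA h ℓ]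
          rfl
  · -- action on the unit
    intro g
    have e1 := reindex_sum (ℛ R g) (fun c d => Br.dot.mul (Br.dot.S c)
      (Br.circ.mul d Br.dot.one))
    have e2 : ∑ i ∈ (ℛ R g).index,
        Br.dot.mul (Br.dot.S ((ℛ R g).left i))
          (Br.circ.mul ((ℛ R g).right i) Br.dot.one)
        = ∑ i ∈ (ℛ R g).index,
        Br.dot.mul (Br.dot.S ((ℛ R g).left i)) ((ℛ R g).right i) := by
      refine Finset.sum_congr rfl fun i _ => ?_
      rw [← one_eq Br, Br.circ.mul_one]
    have e3 := reindex_sum (ℛ R g) (fun c d => Br.dot.mul (Br.dot.S c) d)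
    have e4 := Br.dot.S_mul_left g (reindex (ℛ R g))
    rw [hact g Br.dot.one (reindex (ℛ R g))]
    exact e1.trans (e2.trans (e3.symm.trans e4))
  · -- module algebra property
    intro g h k _ r
    calc
      act g (Br.dot.mul h k)
        = ∑ z ∈ (reindex r).index,
            Br.dot.mul (Br.dot.S ((reindex r).left z))
              (Br.circ.mul ((reindex r).right z) (Br.dot.mul h k)) :=
          hact _ _ (reindex r)
      _ = ∑ i ∈ r.index,
            Br.dot.mul (Br.dot.S (r.left i))
              (Br.circ.mul (r.right i) (Br.dot.mul h k)) :=
          reindex_sum r (fun c d => Br.dot.mul (Br.dot.S c)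
            (Br.circ.mul d (Br.dot.mul h k)))
      _ = ∑ i ∈ r.index, ∑ j ∈ (reindex.{0} (ℛ R (r.right i))).index,
            Br.dot.mul (Br.dot.S (r.left i))
              (Br.dot.mul
                (Br.circ.mul ((reindex.{0} (ℛ R (r.right i))).left j) h)
                (A2 Br k ((reindex.{0} (ℛ R (r.right i))).right j))) := by
          refine Finset.sum_congr rfl fun i _ => ?_
          rw [compat_act Br (r.right i) h k (reindex.{0} (ℛ R (r.right i))), map_sum]
      _ = ∑ i ∈ r.index, ∑ j ∈ (reindex.{0} (ℛ R (r.right i))).index,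
            Br.dot.mul
              (Br.dot.mul (Br.dot.S (r.left i))
                (Br.circ.mul ((reindex.{0} (ℛ R (r.right i))).left j) h))
              (A2 Br k ((reindex.{0} (ℛ R (r.right i))).right j)) := by
          refine Finset.sum_congr rfl fun i _ => Finset.sum_congr rfl fun j _ => ?_
          rw [Br.dot.mul_assoc]
      _ = ∑ i ∈ r.index, ∑ j ∈ (reindex.{0} (ℛ R (r.left i))).index,
            Br.dot.mul
              (Br.dot.mul (Br.dot.S ((reindex.{0} (ℛ R (r.left i))).left j))
                (Br.circ.mul ((reindex.{0} (ℛ R (r.left i))).right j) h))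
              (A2 Br k (r.right i)) :=
          (coassoc_sum
            (cmp3' (Br.dot.mul.compl₂ (A2 Br k)) (bilm Br h))
            r (fun i => reindex.{0} (ℛ R (r.left i)))
            (fun i => reindex.{0} (ℛ R (r.right i)))).symm
      _ = ∑ i ∈ r.index,
            Br.dot.mul (A2 Br h (r.left i)) (A2 Br k (r.right i)) := by
          refine Finset.sum_congr rfl fun i _ => ?_
          rw [A2_eq_sum Br h (reindex.{0} (ℛ R (r.left i))), map_sum,
            LinearMap.sum_apply]
      _ = ∑ i ∈ r.index,
            Br.dot.mul (act (r.left i) h) (act (r.right i) k) := by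
          refine Finset.sum_congr rfl fun i _ => ?_
          rw [hA (r.left i) h, hA (r.right i) k]
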